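/- Let N = ∏_{i=1}^m p_i^{e_i} with m ≥ 2 distinct odd primes and e_i > 0. For each i let u_i generate (ℤ/p_i^{e_i})^*, of order 2^{c_i} p_i' with p_i' odd, and assume c_1 ≥ c_2 ≥ ... ≥ c_m. Let a ∈ (ℤ/N)^* correspond under the Chinese Remainder isomorphism to (u_1^{d_1}, ..., u_m^{d_m}). Let s ≥ 0 be the least integer such that a^{2^s q} ≡ 1 mod N for some odd q. If there exist i < j with d_i odd and d_j even, then s > 0, and x = a^{2^{s−1} q} satisfies x² ≡ 1 mod N and x ≢ ±1 mod N. -/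

import Mathlib

/-- nontrivial square root of 1 mod N from mixed parities of the
CRT exponents. -/
theorem stmt_4 (m : ℕ) (hm : 2 ≤ m) (p e : Fin m → ℕ)
    (hp : ∀ i, (p i).Prime) (hpodd : ∀ i, Odd (p i)) (hinj : Function.Injective p)
    (he : ∀ i, 0 < e i) (N : ℕ) (hN : N = ∏ i, p i ^ e i)
    (hdvd : ∀ i, p i ^ e i ∣ N)
    (u : Π i, (ZMod (p i ^ e i))ˣ)
    (hu : ∀ i, ∀ g : (ZMod (p i ^ e i))ˣ, g ∈ Subgroup.zpowers (u i))
    (c p' : Fin m → ℕ) (hp' : ∀ i, Odd (p' i))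
    (horder : ∀ i, orderOf (u i) = 2 ^ c i * p' i)
    (hc : ∀ i j : Fin m, i ≤ j → c j ≤ c i)
    (a : (ZMod N)ˣ) (d : Fin m → ℕ)
    (hcrt : ∀ i, Units.map (ZMod.castHom (hdvd i) (ZMod (p i ^ e i))).toMonoidHom a
      = u i ^ d i)
    (s q : ℕ) (hq : Odd q) (ha : a ^ (2 ^ s * q) = 1)
    (hmin : ∀ s' q', s' < s → Odd q' → a ^ (2 ^ s' * q') ≠ 1)
    (hij : ∃ i j : Fin m, i < j ∧ Odd (d i) ∧ Even (d j)) :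
    0 < s ∧ (a ^ (2 ^ (s - 1) * q)) ^ 2 = 1 ∧
      a ^ (2 ^ (s - 1) * q) ≠ 1 ∧ a ^ (2 ^ (s - 1) * q) ≠ -1 := by
  obtain ⟨i, j, hij_lt, hdi, hdj⟩ := hij
  haveI hne : ∀ k, NeZero (p k ^ e k) := fun k =>
    ⟨pow_ne_zero _ (hp k).ne_zero⟩
  -- p k ^ e k > 2
  have h2lt : ∀ k, 2 < p k ^ e k := by
    intro k
    have h1 : 3 ≤ p k := by
      obtain ⟨t, ht⟩ := hpodd k
      have := (hp k).two_le
      omega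
    calc 2 < p k := by omega
    _ ≤ p k ^ e k := Nat.le_self_pow (he k).ne' _
  -- order of u k is even
  have heven : ∀ k, 2 ∣ orderOf (u k) := by
    intro k
    haveI := hne k
    rw [orderOf_eq_card_of_forall_mem_zpowers (hu k), Nat.card_eq_fintype_card,
      ZMod.card_units_eq_totient]
    exact (Nat.totient_even (h2lt k)).two_dvd
  -- c k ≥ 1
  have hc1 : ∀ k, 1 ≤ c k := by
    intro k
    by_contra h
    have hck : c k = 0 := by omega
    have h2 : 2 ∣ p' k := by
      have := heven k
      rwa [horder k, hck, pow_zero, one_mul] at this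
    obtain ⟨t, ht⟩ := h2
    obtain ⟨r, hr⟩ := hp' k
    omega
  -- orderOf (u k ^ d k) * gcd = orderOf (u k)
  have hpow_ord : ∀ k, orderOf (u k ^ d k) * Nat.gcd (orderOf (u k)) (d k)
      = orderOf (u k) := by
    intro k
    haveI := hne k
    rw [orderOf_pow (u k)]
    exact Nat.div_mul_cancel (Nat.gcd_dvd_left _ _)
  -- projections of powers of a that equal 1
  have key : ∀ k n, a ^ n = 1 → (u k ^ d k) ^ n = 1 := by
    intro k n h
    rw [← hcrt k, ← map_pow, h, map_one]
  -- 2^(c i) ∣ orderOf (u i ^ d i)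
  have hgodd : ¬ 2 ∣ Nat.gcd (orderOf (u i)) (d i) := by
    intro h2g
    have : 2 ∣ d i := h2g.trans (Nat.gcd_dvd_right _ _)
    obtain ⟨t, ht⟩ := this
    obtain ⟨r, hr⟩ := hdi
    omega
  have hcop : Nat.Coprime (2 ^ c i) (Nat.gcd (orderOf (u i)) (d i)) :=
    (Nat.Prime.coprime_iff_not_dvd Nat.prime_two).mpr hgodd |>.pow_left _
  have hdvd_i : 2 ^ c i ∣ orderOf (u i ^ d i) := by
    apply hcop.dvd_of_dvd_mul_right
    rw [hpow_ord i, horder i]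
    exact Dvd.intro _ rfl
  -- orderOf (u i ^ d i) ∣ 2^s * q, hence c i ≤ s
  have hord_i_dvd : orderOf (u i ^ d i) ∣ 2 ^ s * q :=
    orderOf_dvd_of_pow_eq_one (key i _ ha)
  have hcopq : ∀ r : ℕ, Odd r → Nat.Coprime (2 ^ c i) r := fun r hr =>
    ((Nat.Prime.coprime_iff_not_dvd Nat.prime_two).mpr
      (by obtain ⟨t, ht⟩ := hr; omega)).pow_left _
  have hci_le_s : c i ≤ s := by
    have h1 : 2 ^ c i ∣ 2 ^ s * q := hdvd_i.trans hord_i_dvd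
    have h2 : 2 ^ c i ∣ 2 ^ s := (Nat.Coprime.dvd_of_dvd_mul_right (hcopq q hq) h1)
    exact (Nat.pow_dvd_pow_iff_le_right one_lt_two).mp h2
  have hs_pos : 0 < s := lt_of_lt_of_le (hc1 i) hci_le_s
  refine ⟨hs_pos, ?_, ?_, ?_⟩
  · rw [← pow_mul, show 2 ^ (s - 1) * q * 2 = 2 ^ s * q by
      rw [mul_right_comm, ← pow_succ]; congr 2; omega, ha]
  · exact hmin (s - 1) q (by omega) hq
  · -- a ^ (2^(s-1) * q) ≠ -1
    intro hx
    -- 2^(c i) does not divide orderOf (u j ^ d j)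
    set oj := orderOf (u j ^ d j) with hoj
    have hoj_pos : 0 < oj := by
      haveI := hne j
      exact orderOf_pos _
    have hoj_dvd_u : oj ∣ orderOf (u j) := orderOf_pow_dvd _
    have hnd : ¬ (2 ^ c i ∣ oj) := by
      intro hdvd2
      have h1 : 2 ^ c i ∣ 2 ^ c j * p' j := horder j ▸ hdvd2.trans hoj_dvd_u
      have h2 : 2 ^ c i ∣ 2 ^ c j :=
        Nat.Coprime.dvd_of_dvd_mul_right (hcopq (p' j) (hp' j)) h1
      have h3 : c i ≤ c j := (Nat.pow_dvd_pow_iff_le_right one_lt_two).mp h2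
      have h4 : c j = c i := le_antisymm (hc i j hij_lt.le) h3
      -- gcd (orderOf (u j)) (d j) is even
      have hg2 : 2 ∣ Nat.gcd (orderOf (u j)) (d j) :=
        Nat.dvd_gcd (heven j) hdj.two_dvd
      have h5 : 2 ^ c j * 2 ∣ oj * Nat.gcd (orderOf (u j)) (d j) :=
        mul_dvd_mul (h4 ▸ hdvd2) hg2
      rw [hpow_ord j, horder j] at h5
      have h6 : 2 ∣ p' j :=
        (Nat.mul_dvd_mul_iff_left (pow_pos two_pos (c j))).mp h5
      obtain ⟨t, ht⟩ := h6
      obtain ⟨r, hr⟩ := hp' j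
      omega
    -- 2-adic valuation of oj is < c i ≤ s
    have hv : oj.factorization 2 < c i := by
      by_contra h
      exact hnd ((Nat.Prime.pow_dvd_iff_le_factorization Nat.prime_two
        hoj_pos.ne').mpr (by omega))
    -- odd part
    have hsplit : 2 ^ oj.factorization 2 * (oj / 2 ^ oj.factorization 2) = oj :=
      Nat.ordProj_mul_ordCompl_eq_self oj 2
    have htodd : ¬ 2 ∣ oj / 2 ^ oj.factorization 2 :=
      Nat.not_dvd_ordCompl Nat.prime_two hoj_pos.ne'
    have hoj_dvd : oj ∣ 2 ^ s * q := orderOf_dvd_of_pow_eq_one (key j _ ha)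
    have ht_dvd_q : oj / 2 ^ oj.factorization 2 ∣ q := by
      apply Nat.Coprime.dvd_of_dvd_mul_left
        (Nat.Coprime.pow_right s
          ((Nat.Prime.coprime_iff_not_dvd Nat.prime_two).mpr htodd).symm)
      exact (Nat.div_dvd_of_dvd (Nat.ordProj_dvd oj 2)).trans hoj_dvd
    have hoj_dvd' : oj ∣ 2 ^ (s - 1) * q := by
      rw [← hsplit]
      exact mul_dvd_mul (pow_dvd_pow 2 (by omega)) ht_dvd_q
    have hone : (u j ^ d j) ^ (2 ^ (s - 1) * q) = 1 :=
      orderOf_dvd_iff_pow_eq_one.mp hoj_dvd'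
    -- project the equation x = -1
    have hproj : Units.map (ZMod.castHom (hdvd j) (ZMod (p j ^ e j))).toMonoidHom
        (a ^ (2 ^ (s - 1) * q)) = 1 := by
      rw [map_pow, hcrt j, hone]
    rw [hx] at hproj
    have hval : ((Units.map (ZMod.castHom (hdvd j)
        (ZMod (p j ^ e j))).toMonoidHom (-1) : (ZMod (p j ^ e j))ˣ) : ZMod (p j ^ e j))
        = -1 := by
      simp
    rw [hproj] at hval
    simp only [Units.val_one] at hval
    haveI : Fact (2 < p j ^ e j) := ⟨h2lt j⟩
    exact ZMod.neg_one_ne_one hval.symm
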